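/- With H(d) the expected hitting time of the simple random walk on {0,1}^N to a fixed vertex from Hamming distance d, for every fixed α in (0,1], the ratio H(⌊αN⌋)/2^N converges to 1 as N → ∞. -/

import Mathlib

open Finset Filter

/-- Binomials increase on the left half. -/
lemma aux_choose_mono_left (n : ℕ) : ∀ (b : ℕ) {a : ℕ}, a ≤ b → 2*b ≤ n →
    n.choose a ≤ n.choose b := by
  intro b
  induction b with
  | zero => intro a ha _; rw [Nat.le_zero.mp ha]
  | succ b ih =>
    intro a ha hb
    rcases Nat.eq_or_lt_of_le ha with rfl | h
    · exact le_rfl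
    · calc n.choose a ≤ n.choose b := ih (by omega) (by omega)
        _ ≤ n.choose (b+1) := Nat.choose_le_succ_of_lt_half_left (by omega)

/-- Binomials decrease on the right half. -/
lemma aux_choose_anti_right (n : ℕ) {a b : ℕ} (hab : a ≤ b) (hb : b ≤ n) (ha : n ≤ 2*a) :
    n.choose b ≤ n.choose a := by
  rw [← Nat.choose_symm hb, ← Nat.choose_symm (le_trans hab hb)]
  exact aux_choose_mono_left n (n - a) (by omega) (by omega)

lemma aux_sum_choose (N : ℕ) : ∑ k ∈ Finset.range N, N.choose k + 1 = 2^N := by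
  have h := Nat.sum_range_choose N
  rw [Finset.sum_range_succ] at h
  simpa using h

lemma aux_A_le (N d' : ℕ) :
    1 + ∑ j ∈ Finset.Icc 1 (N - 1 - d'), N.choose (d' + j) ≤ 2^N := by
  have h1 : ∑ j ∈ Finset.Icc 1 (N - 1 - d'), N.choose (d' + j)
      = ∑ k ∈ Finset.Icc (d' + 1) (d' + (N - 1 - d')), N.choose k := by
    rw [← Finset.map_add_left_Icc, Finset.sum_map]
    simp [addLeftEmbedding]
  have h2 : ∑ k ∈ Finset.Icc (d' + 1) (d' + (N - 1 - d')), N.choose k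
      ≤ ∑ k ∈ Finset.range N, N.choose k := by
    apply Finset.sum_le_sum_of_subset
    intro k hk
    simp only [Finset.mem_Icc, Finset.mem_range] at *
    omega
  have h3 := aux_sum_choose N
  omega

lemma aux_two_choose_two (m : ℕ) : 2 * m.choose 2 = m * (m - 1) := by
  rw [Nat.choose_two_right]
  rcases m with _ | k
  · simp
  · simp only [Nat.succ_sub_one]
    rw [Nat.mul_div_cancel' (by rw [mul_comm]; exact (Nat.even_mul_succ_self k).two_dvd)]

lemma aux_A_le_right {N d' : ℕ} (h1 : N ≤ 2*d') (h2 : d' + 1 ≤ N) :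
    1 + ∑ j ∈ Finset.Icc 1 (N - 1 - d'), N.choose (d' + j) ≤ 2*N*((N-1).choose d') := by
  have hdec : ∀ j ∈ Finset.Icc 1 (N - 1 - d'), N.choose (d' + j) ≤ N.choose (d' + 1) := by
    intro j hj
    simp only [Finset.mem_Icc] at hj
    exact aux_choose_anti_right N (by omega) (by omega) (by omega)
  have hsum : ∑ j ∈ Finset.Icc 1 (N - 1 - d'), N.choose (d' + j)
      ≤ (N - 1 - d') * N.choose (d' + 1) := by
    calc ∑ j ∈ Finset.Icc 1 (N - 1 - d'), N.choose (d' + j)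
        ≤ ∑ _j ∈ Finset.Icc 1 (N - 1 - d'), N.choose (d' + 1) := Finset.sum_le_sum hdec
      _ = (N - 1 - d') * N.choose (d' + 1) := by
          rw [Finset.sum_const, Nat.card_Icc, smul_eq_mul, Nat.add_sub_cancel]
  have hpos : 0 < N.choose (d' + 1) := Nat.choose_pos h2
  have hA : 1 + ∑ j ∈ Finset.Icc 1 (N - 1 - d'), N.choose (d' + j)
      ≤ N * N.choose (d' + 1) := by
    have : (1 + (N - 1 - d')) * N.choose (d' + 1) ≤ N * N.choose (d' + 1) :=
      Nat.mul_le_mul_right _ (by omega)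
    have h' : (1 + (N - 1 - d')) * N.choose (d' + 1)
        = N.choose (d' + 1) + (N - 1 - d') * N.choose (d' + 1) := by ring
    omega
  have hid : N * (N-1).choose d' = N.choose (d'+1) * (d'+1) := by
    have h := Nat.add_one_mul_choose_eq (N-1) d'
    have hN : N - 1 + 1 = N := by omega
    simpa [Nat.succ_eq_add_one, hN] using h
  have key : (1 + ∑ j ∈ Finset.Icc 1 (N - 1 - d'), N.choose (d' + j)) * (d'+1)
      ≤ (2*N*((N-1).choose d')) * (d'+1) := by
    calc (1 + ∑ j ∈ Finset.Icc 1 (N - 1 - d'), N.choose (d' + j)) * (d'+1)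
        ≤ (N * N.choose (d'+1)) * (d'+1) := Nat.mul_le_mul_right _ hA
      _ = N * (N * (N-1).choose d') := by rw [mul_assoc, ← hid]
      _ ≤ (2*(d'+1)) * (N * (N-1).choose d') := Nat.mul_le_mul_right _ (by omega)
      _ = (2*N*((N-1).choose d')) * (d'+1) := by ring
  exact Nat.le_of_mul_le_mul_right key (by omega)

noncomputable def hittingTimeH (N d : ℕ) : ℝ :=
  ∑ d' ∈ Finset.range d,
    (1 + ∑ j ∈ Finset.Icc 1 (N - 1 - d'), (N.choose (d' + j) : ℝ)) /
      ((N - 1).choose d' : ℝ)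

lemma aux_sum_tail {N : ℕ} (hN : 1 ≤ N) :
    ∑ j ∈ Finset.Icc 1 (N-1), N.choose j + 2 = 2^N := by
  have h0 := aux_sum_choose N
  have h1 : ∑ k ∈ Finset.range N, N.choose k
      = N.choose 0 + ∑ j ∈ Finset.Ico 1 N, N.choose j := by
    rw [Finset.range_eq_Ico]; exact Finset.sum_eq_sum_Ico_succ_bot hN _
  have h2 : Finset.Ico 1 N = Finset.Icc 1 (N-1) := by
    rw [← Finset.Ico_add_one_right_eq_Icc]; congr 1; omega
  rw [h2] at h1
  simp only [Nat.choose_zero_right] at h1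
  omega

lemma aux_t0 {N : ℕ} (hN : 1 ≤ N) :
    (1 + ∑ j ∈ Finset.Icc 1 (N - 1 - 0), (N.choose (0 + j) : ℝ)) /
      ((N - 1).choose 0 : ℝ) = 2^N - 1 := by
  have h := aux_sum_tail hN
  have hc : ((N-1).choose 0 : ℝ) = 1 := by simp
  rw [hc, div_one]
  simp only [Nat.sub_zero, Nat.zero_add, zero_add]
  have h' := congrArg (fun n : ℕ => (n : ℝ)) h
  push_cast at h'
  linarith

lemma aux_H_lower {N d : ℕ} (hN : 1 ≤ N) (hd : 1 ≤ d) :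
    (2:ℝ)^N - 1 ≤ hittingTimeH N d := by
  rw [hittingTimeH]
  have h0 : (0:ℕ) ∈ Finset.range d := by simp; omega
  calc (2:ℝ)^N - 1
      = (1 + ∑ j ∈ Finset.Icc 1 (N - 1 - 0), (N.choose (0 + j) : ℝ)) /
        ((N - 1).choose 0 : ℝ) := (aux_t0 hN).symm
    _ ≤ _ := Finset.single_le_sum (f := fun d' =>
        (1 + ∑ j ∈ Finset.Icc 1 (N - 1 - d'), (N.choose (d' + j) : ℝ)) /
          ((N - 1).choose d' : ℝ)) (fun i _ => div_nonneg
        (add_nonneg zero_le_one (Finset.sum_nonneg fun j _ => Nat.cast_nonneg _))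
        (Nat.cast_nonneg _)) h0

lemma aux_H_upper {N d : ℕ} (hN : 8 ≤ N) (hd2 : 2 ≤ d) (hdN : d ≤ N) :
    hittingTimeH N d ≤ ((2:ℝ)^N - 1) + 2^N/((N:ℝ)-1)
      + (N:ℝ) * (2^N/(((N-1).choose 2 : ℕ) : ℝ) + 2*(N:ℝ)) := by
  set f : ℕ → ℝ := fun d' =>
    (1 + ∑ j ∈ Finset.Icc 1 (N - 1 - d'), (N.choose (d' + j) : ℝ)) /
      ((N - 1).choose d' : ℝ) with hf
  have hsplit : hittingTimeH N d = f 0 + (f 1 + ∑ d' ∈ Finset.Ico 2 d, f d') := by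
    rw [hittingTimeH, Finset.range_eq_Ico,
        Finset.sum_eq_sum_Ico_succ_bot (by omega : 0 < d),
        Finset.sum_eq_sum_Ico_succ_bot (by omega : 1 < d)]
  have h0 : f 0 = 2^N - 1 := aux_t0 (by omega)
  have hN1 : (0:ℝ) < (N:ℝ) - 1 := by
    have : (8:ℝ) ≤ (N:ℝ) := by exact_mod_cast hN
    linarith
  have h1 : f 1 ≤ 2^N/((N:ℝ)-1) := by
    have hA : (1 + ∑ j ∈ Finset.Icc 1 (N-1-1), (N.choose (1+j):ℝ)) ≤ 2^N := by
      exact_mod_cast aux_A_le N 1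
    have hden : ((N-1).choose 1 : ℝ) = (N:ℝ) - 1 := by
      rw [Nat.choose_one_right, Nat.cast_sub (by omega : 1 ≤ N), Nat.cast_one]
    have hfe : f 1 = (1 + ∑ j ∈ Finset.Icc 1 (N-1-1), (N.choose (1+j):ℝ)) / ((N:ℝ)-1) := by
      simp only [hf]; rw [hden]
    rw [hfe]
    exact (div_le_div_iff_of_pos_right hN1).mpr hA
  have hterm : ∀ d' ∈ Finset.Ico 2 d,
      f d' ≤ 2^N/(((N-1).choose 2 : ℕ) : ℝ) + 2*(N:ℝ) := by
    intro d' hd'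
    simp only [Finset.mem_Ico] at hd'
    have hd'N : d' ≤ N - 1 := by omega
    have hpos2 : (0:ℝ) < (((N-1).choose 2 : ℕ) : ℝ) := by
      exact_mod_cast Nat.choose_pos (by omega : 2 ≤ N-1)
    by_cases hc : 2*d' ≤ N - 1
    · have hmono : (N-1).choose 2 ≤ (N-1).choose d' :=
        aux_choose_mono_left (N-1) d' hd'.1 hc
      have hA : (1 + ∑ j ∈ Finset.Icc 1 (N-1-d'), (N.choose (d'+j):ℝ)) ≤ 2^N := by
        exact_mod_cast aux_A_le N d'
      have hle : f d' ≤ 2^N/(((N-1).choose 2 : ℕ) : ℝ) := by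
        simp only [hf]
        exact div_le_div₀ (by positivity) hA hpos2 (by exact_mod_cast hmono)
      have : (0:ℝ) ≤ 2*(N:ℝ) := by positivity
      linarith
    · have hAr := aux_A_le_right (by omega : N ≤ 2*d') (by omega : d'+1 ≤ N)
      have hpos : (0:ℝ) < ((N-1).choose d' : ℝ) := by
        exact_mod_cast Nat.choose_pos hd'N
      have hle : f d' ≤ 2*(N:ℝ) := by
        simp only [hf]
        rw [div_le_iff₀ hpos]
        calc (1 + ∑ j ∈ Finset.Icc 1 (N-1-d'), (N.choose (d'+j):ℝ))
            ≤ ((2*N*((N-1).choose d') : ℕ) : ℝ) := by exact_mod_cast hAr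
          _ = 2*(N:ℝ)*((N-1).choose d' : ℝ) := by push_cast; ring
      have : (0:ℝ) ≤ 2^N/(((N-1).choose 2 : ℕ) : ℝ) := by positivity
      linarith
  have hsum2 : ∑ d' ∈ Finset.Ico 2 d, f d'
      ≤ (N:ℝ) * (2^N/(((N-1).choose 2 : ℕ) : ℝ) + 2*(N:ℝ)) := by
    calc ∑ d' ∈ Finset.Ico 2 d, f d'
        ≤ ∑ _d' ∈ Finset.Ico 2 d, (2^N/(((N-1).choose 2 : ℕ) : ℝ) + 2*(N:ℝ)) :=
          Finset.sum_le_sum hterm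
      _ = ((d - 2 : ℕ) : ℝ) * (2^N/(((N-1).choose 2 : ℕ) : ℝ) + 2*(N:ℝ)) := by
          rw [Finset.sum_const, Nat.card_Ico, nsmul_eq_mul]
      _ ≤ (N:ℝ) * (2^N/(((N-1).choose 2 : ℕ) : ℝ) + 2*(N:ℝ)) := by
          apply mul_le_mul_of_nonneg_right _ (by positivity)
          exact_mod_cast (by omega : d - 2 ≤ N)
  rw [hsplit, h0]
  linarith

theorem stmt_5 (α : ℝ) (hα : α ∈ Set.Ioc (0 : ℝ) 1) :
    Filter.Tendsto (fun N : ℕ => hittingTimeH N ⌊α * N⌋₊ / 2 ^ N)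
      Filter.atTop (nhds 1) := by
  obtain ⟨hα0, hα1⟩ := hα
  have hαN : Tendsto (fun N : ℕ => α * N) atTop atTop :=
    Tendsto.const_mul_atTop hα0 tendsto_natCast_atTop_atTop
  -- lower bound function
  have hlo : Tendsto (fun N : ℕ => 1 - (1/2:ℝ)^N) atTop (nhds 1) := by
    have h := tendsto_pow_atTop_nhds_zero_of_lt_one (by norm_num : (0:ℝ) ≤ 1/2)
      (by norm_num : (1/2:ℝ) < 1)
    simpa using (tendsto_const_nhds : Tendsto (fun _ : ℕ => (1:ℝ)) atTop (nhds 1)).sub h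
  -- upper bound function
  have hup : Tendsto (fun N : ℕ =>
      1 + ((N:ℝ)-1)⁻¹ + 8/(N:ℝ) + 2*(N:ℝ)^2*(1/2)^N) atTop (nhds 1) := by
    have h1 : Tendsto (fun N : ℕ => ((N:ℝ)-1)⁻¹) atTop (nhds 0) := by
      apply tendsto_inv_atTop_zero.comp
      have := tendsto_atTop_add_const_right atTop (-1 : ℝ) tendsto_natCast_atTop_atTop
      simpa [sub_eq_add_neg] using this
    have h2 : Tendsto (fun N : ℕ => 8/(N:ℝ)) atTop (nhds 0) :=
      tendsto_const_div_atTop_nhds_zero_nat 8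
    have h3 : Tendsto (fun N : ℕ => 2*(N:ℝ)^2*(1/2)^N) atTop (nhds 0) := by
      have := (tendsto_pow_const_mul_const_pow_of_lt_one 2
        (by norm_num : (0:ℝ) ≤ 1/2) (by norm_num : (1/2:ℝ) < 1)).const_mul 2
      simpa [mul_assoc] using this
    have := (((tendsto_const_nhds : Tendsto (fun _ : ℕ => (1:ℝ)) atTop (nhds 1)).add h1).add h2).add h3
    simpa using this
  have hev : ∀ᶠ N : ℕ in atTop, 8 ≤ N ∧ 2 ≤ ⌊α * N⌋₊ ∧ ⌊α * N⌋₊ ≤ N := by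
    filter_upwards [eventually_ge_atTop 8, hαN.eventually_ge_atTop 2] with N h8 h2
    refine ⟨h8, ?_, ?_⟩
    · exact Nat.le_floor (by exact_mod_cast h2)
    · have hle : α * N ≤ (N:ℝ) := by
        nlinarith [mul_nonneg (by linarith : (0:ℝ) ≤ 1 - α) (by positivity : (0:ℝ) ≤ (N:ℝ))]
      calc ⌊α * (N:ℝ)⌋₊ ≤ ⌊(N:ℝ)⌋₊ := Nat.floor_mono hle
        _ = N := Nat.floor_natCast N
  apply tendsto_of_tendsto_of_tendsto_of_le_of_le' hlo hup
  · filter_upwards [hev] with N hN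
    obtain ⟨h8, h2, hdN⟩ := hN
    have h2pos : (0:ℝ) < 2^N := by positivity
    rw [le_div_iff₀ h2pos]
    have hH := aux_H_lower (N := N) (d := ⌊α * N⌋₊) (by omega) (by omega)
    have hid : ((1:ℝ) - (1/2)^N) * 2^N = 2^N - 1 := by
      rw [sub_mul, one_mul, ← mul_pow]; norm_num
    linarith
  · filter_upwards [hev] with N hN
    obtain ⟨h8, h2, hdN⟩ := hN
    have h2pos : (0:ℝ) < 2^N := by positivity
    rw [div_le_iff₀ h2pos]
    have hupper := aux_H_upper h8 h2 hdN
    have hNpos : (0:ℝ) < (N:ℝ) := by exact_mod_cast (by omega : 0 < N)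
    have hN1 : (0:ℝ) < (N:ℝ) - 1 := by
      have : (8:ℝ) ≤ (N:ℝ) := by exact_mod_cast h8
      linarith
    have hC2pos : (0:ℝ) < (((N-1).choose 2 : ℕ) : ℝ) := by
      exact_mod_cast Nat.choose_pos (by omega : 2 ≤ N-1)
    -- N^2 ≤ 8 * C(N-1,2)
    have hC2nat : N^2 ≤ 8 * ((N-1).choose 2) := by
      have h := aux_two_choose_two (N-1)
      obtain ⟨a, rfl⟩ : ∃ a, N = a + 8 := ⟨N - 8, by omega⟩
      have e1 : a + 8 - 1 = a + 7 := by omega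
      have e2 : a + 7 - 1 = a + 6 := by omega
      rw [e1] at h ⊢
      rw [e2] at h
      nlinarith [h]
    have hC2 : ((N:ℝ))^2 ≤ 8 * (((N-1).choose 2 : ℕ) : ℝ) := by exact_mod_cast hC2nat
    have e1 : (N:ℝ) * (2^N/(((N-1).choose 2 : ℕ) : ℝ)) ≤ (8/(N:ℝ))*2^N := by
      rw [mul_div_assoc', div_mul_eq_mul_div, div_le_div_iff₀ hC2pos hNpos]
      nlinarith [mul_le_mul_of_nonneg_right hC2 h2pos.le]
    have e0 : (N:ℝ)*(2^N/(((N-1).choose 2 : ℕ) : ℝ) + 2*(N:ℝ))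
        = (N:ℝ)*(2^N/(((N-1).choose 2 : ℕ) : ℝ)) + 2*(N:ℝ)^2 := by ring
    have hid : ((1:ℝ)/2)^N * 2^N = 1 := by rw [← mul_pow]; norm_num
    have expand : (1 + ((N:ℝ)-1)⁻¹ + 8/(N:ℝ) + 2*(N:ℝ)^2*(1/2)^N) * 2^N
        = 2^N + 2^N/((N:ℝ)-1) + (8/(N:ℝ))*2^N + 2*(N:ℝ)^2 := by
      have : (2*(N:ℝ)^2*(1/2)^N) * 2^N = 2*(N:ℝ)^2 := by
        rw [mul_assoc, hid, mul_one]
      rw [add_mul, add_mul, add_mul, this, one_mul, div_eq_mul_inv ((2:ℝ)^N), mul_comm ((2:ℝ)^N)]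
    rw [expand]
    linarith [hupper, e0, e1]
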